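/- Let (X,G) be a symmetric G-metric space and T: X → X injective satisfying the strict non-expansive-type condition G(Tx,Ty,Tz) < max{ G(x,y,z), [G(x,y,z)·G(Tx,Ty,Tz)]^{-1}·G(x,Tx,Tx)·G(y,Ty,Ty)·G(z,Tz,Tz) } for all x ≠ y. Then for any x₀ ∈ X with T^n x₀ ≠ T^{n+1} x₀ for all n, the sequence (G(T^n x₀, T^{n+1} x₀, T^{n+1} x₀)) is strictly decreasing, hence convergent. -/

import Mathlib

open Filter Topology Function

structure GMetricSpace (X : Type*) where
  G : X → X → X → ℝ
  nonneg : ∀ x y z, 0 ≤ G x y z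
  eq_zero_iff : ∀ x y z, G x y z = 0 ↔ x = y ∧ y = z
  le_of_ne : ∀ x y z, z ≠ y → G x x y ≤ G x y z
  symm_swap : ∀ x y z, G x y z = G x z y
  symm_cycle : ∀ x y z, G x y z = G y z x
  rect : ∀ x y z a, G x y z ≤ G x a a + G a y z

/-- `(x_n)` G-converges to `x`. -/
def GConv {X : Type*} (g : GMetricSpace X) (s : ℕ → X) (x : X) : Prop :=
  Tendsto (fun n => g.G x (s n) (s n)) atTop (𝓝 0)

/-- `(x_n)` is a G-Cauchy sequence. -/
def GCauchy {X : Type*} (g : GMetricSpace X) (s : ℕ → X) : Prop :=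
  ∀ ε > 0, ∃ N, ∀ m ≥ N, ∀ n ≥ N, g.G (s n) (s m) (s m) < ε

/-- `(X,G)` is a symmetric G-metric space. -/
def GSymmetric {X : Type*} (g : GMetricSpace X) : Prop :=
  ∀ x y, g.G x y y = g.G x x y

/-- `T` is orbitally continuous. -/
def OrbContinuous {X : Type*} (g : GMetricSpace X) (T : X → X) : Prop :=
  ∀ (x xs : X) (φ : ℕ → ℕ), StrictMono φ →
    GConv g (fun i => T^[φ i] x) xs → GConv g (fun i => T (T^[φ i] x)) (T xs)

/-- `X` is `T`-orbitally complete. -/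
def TOrbComplete {X : Type*} (g : GMetricSpace X) (T : X → X) : Prop :=
  ∀ (a : X) (s : ℕ → X), (∀ i, ∃ k, s i = T^[k] a) → GCauchy g s → ∃ u, GConv g s u

theorem stmt_9 {X : Type*} (g : GMetricSpace X) (hsym : GSymmetric g)
    (T : X → X) (hinj : Function.Injective T)
    (hcontr : ∀ x y z, x ≠ y →
      g.G (T x) (T y) (T z) <
        max (g.G x y z)
          ((g.G x y z * g.G (T x) (T y) (T z))⁻¹ *
            (g.G x (T x) (T x) * g.G y (T y) (T y) * g.G z (T z) (T z))))
    (x₀ : X) (hne : ∀ n : ℕ, T^[n] x₀ ≠ T^[n + 1] x₀) :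
    StrictAnti (fun n : ℕ => g.G (T^[n] x₀) (T^[n + 1] x₀) (T^[n + 1] x₀)) ∧
      ∃ L : ℝ, Tendsto (fun n : ℕ => g.G (T^[n] x₀) (T^[n + 1] x₀) (T^[n + 1] x₀))
        atTop (𝓝 L) := by
  set d : ℕ → ℝ := fun n => g.G (T^[n] x₀) (T^[n + 1] x₀) (T^[n + 1] x₀) with hd
  have hpos : ∀ n, 0 < d n := by
    intro n
    rcases lt_or_eq_of_le (g.nonneg (T^[n] x₀) (T^[n + 1] x₀) (T^[n + 1] x₀)) with h | h
    · exact h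
    · exact absurd (((g.eq_zero_iff _ _ _).1 h.symm).1) (hne n)
  have key : ∀ n, d (n + 1) < d n := by
    intro n
    have hne' : T^[n] x₀ ≠ T^[n + 1] x₀ := hne n
    have h := hcontr (T^[n] x₀) (T^[n + 1] x₀) (T^[n + 1] x₀) hne'
    have e1 : T (T^[n] x₀) = T^[n + 1] x₀ := (Function.iterate_succ_apply' T n x₀).symm
    have e2 : T (T^[n + 1] x₀) = T^[n + 2] x₀ := (Function.iterate_succ_apply' T (n+1) x₀).symm
    rw [e1, e2] at h
    have h1 : g.G (T^[n + 1] x₀) (T^[n + 2] x₀) (T^[n + 2] x₀) = d (n + 1) := rfl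
    have h2 : g.G (T^[n] x₀) (T^[n + 1] x₀) (T^[n + 1] x₀) = d n := rfl
    rw [h1, h2] at h
    have hsimp : (d n * d (n + 1))⁻¹ * (d n * d (n + 1) * d (n + 1)) = d (n + 1) := by
      field_simp
      exact mul_div_cancel_left₀ _ (hpos n).ne'
    rw [hsimp] at h
    rcases le_or_gt (d n) (d (n + 1)) with hle | hlt
    · rw [max_eq_right hle] at h
      exact absurd h (lt_irrefl _)
    · exact hlt
  have hanti : StrictAnti d := strictAnti_nat_of_succ_lt key
  refine ⟨hanti, ?_⟩
  have hbdd : BddBelow (Set.range d) := ⟨0, by rintro x ⟨n, rfl⟩; exact (hpos n).le⟩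
  exact ⟨⨅ n, d n, tendsto_atTop_ciInf hanti.antitone hbdd⟩
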